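/- For every natural number k \ge 1, the number of directed paths in the action graph A_k from the (unique) vertex labeled 1 to vertices labeled k is equal to the number of directed paths in the action graph A_{k-1} from the vertex labeled 0 to vertices labeled k-1. -/

import Mathlib

/-- Vertices of action graphs: the root (labeled 0), or a vertex created at some
step, recorded together with its label and the path (head and tail of the vertex
sequence) that created it. -/
inductive AGVert : Type
  | root : AGVert
  | node (lbl : ℕ) (head : AGVert) (tail : List AGVert) : AGVert

/-- The label of a vertex. -/
def AGVert.label : AGVert → ℕ
  | .root => 0
  | .node l _ _ => l

/-- `IsPath E a l` says that `a :: l` is the vertex sequence of a directed path in a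
graph with edge set `E` (the trivial path at `a` when `l = []`). -/
def IsPath (E : Set (AGVert × AGVert)) (a : AGVert) (l : List AGVert) : Prop :=
  List.Chain (fun x y => (x, y) ∈ E) a l

/-- The terminal vertex of the path with vertex sequence `a :: l`. -/
def pathLast (a : AGVert) (l : List AGVert) : AGVert :=
  (a :: l).getLast (List.cons_ne_nil a l)

/-- The action graph `A k`, given by its set of vertices together with its set of
(nontrivial, directed) edges.  `A 0` has one vertex (labeled 0) and no nontrivial
edges; `A (k+1)` is obtained from `A k` by adjoining, for each directed path
(including trivial ones) in `A k` whose terminal vertex is labeled `k`, a new vertex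
labeled `k+1` and a new edge from the initial vertex of the path to the new vertex. -/
def actionGraph : ℕ → Set AGVert × Set (AGVert × AGVert)
  | 0 => ({AGVert.root}, ∅)
  | k + 1 =>
    let G := actionGraph k
    (G.1 ∪ { w | ∃ a l, a ∈ G.1 ∧ IsPath G.2 a l ∧ (pathLast a l).label = k ∧
        w = AGVert.node (k + 1) a l },
     G.2 ∪ { e | ∃ a l, a ∈ G.1 ∧ IsPath G.2 a l ∧ (pathLast a l).label = k ∧
        e = (a, AGVert.node (k + 1) a l) })

theorem ag_fst_succ (k : ℕ) : (actionGraph (k+1)).1 =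
    (actionGraph k).1 ∪ { w | ∃ a l, a ∈ (actionGraph k).1 ∧ IsPath (actionGraph k).2 a l ∧
      (pathLast a l).label = k ∧ w = AGVert.node (k + 1) a l } := rfl

theorem ag_snd_succ (k : ℕ) : (actionGraph (k+1)).2 =
    (actionGraph k).2 ∪ { e | ∃ a l, a ∈ (actionGraph k).1 ∧ IsPath (actionGraph k).2 a l ∧
      (pathLast a l).label = k ∧ e = (a, AGVert.node (k + 1) a l) } := rfl

theorem root_mem (j : ℕ) : AGVert.root ∈ (actionGraph j).1 := by
  induction j with
  | zero => simp [actionGraph]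
  | succ j ih => rw [ag_fst_succ]; exact Or.inl ih

theorem vert_label (j : ℕ) : ∀ w ∈ (actionGraph j).1, w.label ≤ j := by
  induction j with
  | zero => intro w hw; simp [actionGraph] at hw; subst hw; simp [AGVert.label]
  | succ j ih =>
      intro w hw
      rw [ag_fst_succ] at hw
      rcases hw with hw | ⟨a, l, _, _, _, rfl⟩
      · exact (ih w hw).trans (Nat.le_succ j)
      · simp [AGVert.label]

theorem edge_lem (j : ℕ) : ∀ u v, (u, v) ∈ (actionGraph j).2 →
    u ∈ (actionGraph j).1 ∧ u.label < v.label ∧ v.label ≤ j := by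
  induction j with
  | zero => intro u v h; simp [actionGraph] at h
  | succ j ih =>
      intro u v h
      rw [ag_snd_succ] at h
      rcases h with h | ⟨a, l, ha, _, _, he⟩
      · obtain ⟨h1, h2, h3⟩ := ih u v h
        exact ⟨Or.inl h1, h2, h3.trans (Nat.le_succ j)⟩
      · injection he with h1 h2
        subst h1; subst h2
        refine ⟨Or.inl ha, ?_, le_refl _⟩
        simp only [AGVert.label]
        exact Nat.lt_succ_of_le (vert_label j _ ha)

mutual
def phi : AGVert → AGVert
  | .root => .node 1 .root []
  | .node m a t => .node (m+1) (phi a) (phiList t)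
def phiList : List AGVert → List AGVert
  | [] => []
  | x :: xs => phi x :: phiList xs
end

theorem phiList_eq_map : ∀ l : List AGVert, phiList l = l.map phi := by
  intro l; induction l with
  | nil => rfl
  | cons x xs ih => simp [phiList, ih]

theorem phi_ne_root : ∀ a, phi a ≠ AGVert.root := by
  intro a; cases a <;> simp [phi]

mutual
theorem phi_inj : ∀ a b : AGVert, phi a = phi b → a = b
  | .root, .root, _ => rfl
  | .root, .node m a t, h => by
      simp only [phi, AGVert.node.injEq] at h
      obtain ⟨h1, h2, h3⟩ := h
      exact absurd h2.symm (phi_ne_root a)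
  | .node m a t, .root, h => by
      simp only [phi, AGVert.node.injEq] at h
      obtain ⟨h1, h2, h3⟩ := h
      exact absurd h2 (phi_ne_root a)
  | .node m a t, .node m' a' t', h => by
      simp only [phi, AGVert.node.injEq] at h
      obtain ⟨h1, h2, h3⟩ := h
      exact by rw [Nat.add_right_cancel h1, phi_inj a a' h2, phiList_inj t t' h3]
theorem phiList_inj : ∀ l m : List AGVert, phiList l = phiList m → l = m
  | [], [], _ => rfl
  | [], x :: xs, h => by simp [phiList] at h
  | x :: xs, [], h => by simp [phiList] at h
  | x :: xs, y :: ys, h => by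
      simp only [phiList, List.cons.injEq] at h
      rw [phi_inj x y h.1, phiList_inj xs ys h.2]
end

theorem phi_injective : Function.Injective phi := fun a b h => phi_inj a b h

theorem label_phi (a : AGVert) : (phi a).label = a.label + 1 := by
  cases a <;> simp [phi, AGVert.label]

theorem pathLast_cons (a b : AGVert) (l : List AGVert) :
    pathLast a (b :: l) = pathLast b l := by
  simp [pathLast, List.getLast]

theorem pathLast_nil (a : AGVert) : pathLast a [] = a := rfl

theorem pathLast_map : ∀ (l : List AGVert) (a : AGVert),
    pathLast (phi a) (l.map phi) = phi (pathLast a l) := by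
  intro l
  induction l with
  | nil => intro a; rfl
  | cons b t ih => intro a; simp only [List.map_cons, pathLast_cons]; exact ih b

theorem label1_unique (j : ℕ) : ∀ w ∈ (actionGraph j).1, w.label = 1 →
    w = AGVert.node 1 AGVert.root [] := by
  induction j with
  | zero => intro w hw h1; simp [actionGraph] at hw; subst hw; simp [AGVert.label] at h1
  | succ j ih =>
      intro w hw h1
      rw [ag_fst_succ] at hw
      rcases hw with hw | ⟨a, l, ha, hp, hl, rfl⟩
      · exact ih w hw h1
      · simp only [AGVert.label] at h1
        obtain rfl : j = 0 := by omega
        simp [actionGraph] at ha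
        subst ha
        cases l with
        | nil => rfl
        | cons x xs =>
            exfalso
            have := hp
            simp only [IsPath, List.Chain, List.isChain_cons_cons] at this
            exact absurd this.1 (by simp [actionGraph])

theorem isPath_map (j : ℕ)
    (edgefwd : ∀ x y, (x, y) ∈ (actionGraph j).2 → (phi x, phi y) ∈ (actionGraph (j+1)).2)
    (a : AGVert) (l : List AGVert) (h : IsPath (actionGraph j).2 a l) :
    IsPath (actionGraph (j+1)).2 (phi a) (l.map phi) := by
  simp only [IsPath, List.Chain, ← List.map_cons, List.isChain_map]
  exact List.Chain.imp (fun x y hxy => edgefwd x y hxy) h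

theorem path_lift (j : ℕ)
    (back : ∀ x y, x ∈ (actionGraph j).1 → (phi x, y) ∈ (actionGraph (j+1)).2 →
      ∃ y', y' ∈ (actionGraph j).1 ∧ y = phi y' ∧ (x, y') ∈ (actionGraph j).2) :
    ∀ (L : List AGVert) (x : AGVert), x ∈ (actionGraph j).1 →
      IsPath (actionGraph (j+1)).2 (phi x) L →
      ∃ l, L = l.map phi ∧ IsPath (actionGraph j).2 x l := by
  intro L
  induction L with
  | nil => intro x _ _; exact ⟨[], rfl, List.Chain.nil⟩
  | cons y L' ih =>
      intro x hx hp
      simp only [IsPath, List.Chain, List.isChain_cons_cons] at hp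
      obtain ⟨he, hc⟩ := hp
      obtain ⟨y', hy'mem, rfl, hxy'⟩ := back x y hx he
      obtain ⟨l', rfl, hl'⟩ := ih y' hy'mem hc
      exact ⟨y' :: l', by simp, by simp only [IsPath, List.Chain, List.isChain_cons_cons]; exact ⟨hxy', hl'⟩⟩

theorem main (j : ℕ) :
    (∀ x ∈ (actionGraph j).1, phi x ∈ (actionGraph (j+1)).1) ∧
    (∀ x y, (x, y) ∈ (actionGraph j).2 → (phi x, phi y) ∈ (actionGraph (j+1)).2) ∧
    (∀ x y, x ∈ (actionGraph j).1 → (phi x, y) ∈ (actionGraph (j+1)).2 →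
      ∃ y', y' ∈ (actionGraph j).1 ∧ y = phi y' ∧ (x, y') ∈ (actionGraph j).2) := by
  induction j with
  | zero =>
      refine ⟨?_, ?_, ?_⟩
      · intro x hx
        simp only [actionGraph, Set.mem_singleton_iff] at hx
        subst hx
        rw [ag_fst_succ]
        refine Or.inr ⟨AGVert.root, [], by simp [actionGraph], List.Chain.nil, rfl, rfl⟩
      · intro x y h
        simp only [actionGraph] at h
        exact absurd h (Set.notMem_empty _)
      · intro x y hx h
        rw [ag_snd_succ] at h
        rcases h with h | ⟨a, l, ha, hp, hl, he⟩
        · simp only [actionGraph] at h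
          exact absurd h (Set.notMem_empty _)
        · injection he with h1 h2
          simp only [actionGraph, Set.mem_singleton_iff] at ha
          subst ha
          exact absurd h1 (phi_ne_root x)
  | succ j ih =>
      obtain ⟨ihm, ihe, ihb⟩ := ih
      have hmem : ∀ x ∈ (actionGraph (j+1)).1, phi x ∈ (actionGraph (j+2)).1 := by
        intro x hx
        rw [ag_fst_succ] at hx
        rcases hx with hx | ⟨a, l, ha, hp, hl, rfl⟩
        · rw [ag_fst_succ (j+1)]; exact Or.inl (ihm x hx)
        · rw [ag_fst_succ (j+1)]
          refine Or.inr ⟨phi a, l.map phi, ihm a ha, isPath_map j ihe a l hp, ?_, ?_⟩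
          · rw [pathLast_map, label_phi, hl]
          · simp only [phi, phiList_eq_map]
      refine ⟨hmem, ?_, ?_⟩
      · intro x y h
        rw [ag_snd_succ] at h
        rcases h with h | ⟨a, l, ha, hp, hl, he⟩
        · rw [ag_snd_succ (j+1)]; exact Or.inl (ihe x y h)
        · injection he with h1 h2
          subst h1; subst h2
          rw [ag_snd_succ (j+1)]
          refine Or.inr ⟨phi x, l.map phi, ihm x ha, isPath_map j ihe x l hp, ?_, ?_⟩
          · rw [pathLast_map, label_phi, hl]
          · simp only [phi, phiList_eq_map]
      · intro x y hx h
        have hxj : x ∈ (actionGraph j).1 := by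
          obtain ⟨_, hlt, hle⟩ := edge_lem (j+2) (phi x) y h
          rw [label_phi] at hlt
          rw [ag_fst_succ] at hx
          rcases hx with hx | ⟨a, l, _, _, _, rfl⟩
          · exact hx
          · exfalso
            have hx1 : (AGVert.node (j+1) a l).label = j+1 := rfl
            rw [hx1] at hlt
            omega
        rw [ag_snd_succ (j+1)] at h
        rcases h with h | ⟨a, l, ha, hp, hl, he⟩
        · obtain ⟨y', hy'm, rfl, hxy'⟩ := ihb x y hxj h
          exact ⟨y', Or.inl hy'm, rfl, Or.inl hxy'⟩
        · injection he with h1 h2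
          subst h2
          subst h1
          obtain ⟨l', rfl, hl'⟩ := path_lift j ihb l x hxj hp
          rw [pathLast_map, label_phi] at hl
          refine ⟨AGVert.node (j+1) x l', ?_, ?_, ?_⟩
          · rw [ag_fst_succ]
            exact Or.inr ⟨x, l', hxj, hl', by omega, rfl⟩
          · simp only [phi, phiList_eq_map]
          · rw [ag_snd_succ]
            exact Or.inr ⟨x, l', hxj, hl', by omega, rfl⟩


/-- For `k ≥ 1`, the number of directed paths in `A k` from the vertex labeled 1 to
vertices labeled `k` equals the number of directed paths in `A (k-1)` from the vertex
labeled 0 to vertices labeled `k-1`. -/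
theorem stmt_1 (k : ℕ) (hk : 1 ≤ k) :
    {p : AGVert × List AGVert | p.1 ∈ (actionGraph k).1 ∧
        IsPath (actionGraph k).2 p.1 p.2 ∧ p.1.label = 1 ∧
        (pathLast p.1 p.2).label = k}.ncard =
      {p : AGVert × List AGVert | p.1 ∈ (actionGraph (k - 1)).1 ∧
        IsPath (actionGraph (k - 1)).2 p.1 p.2 ∧ p.1.label = 0 ∧
        (pathLast p.1 p.2).label = k - 1}.ncard := by
  obtain ⟨j, rfl⟩ : ∃ j, k = j + 1 := ⟨k - 1, by omega⟩
  simp only [Nat.add_sub_cancel]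
  obtain ⟨hm, he, hb⟩ := main j
  have hphiroot : phi AGVert.root = AGVert.node 1 AGVert.root [] := by simp [phi]
  have hF : Function.Injective (fun p : AGVert × List AGVert => (phi p.1, p.2.map phi)) := by
    intro ⟨a, l⟩ ⟨b, m⟩ hab
    simp only [Prod.mk.injEq] at hab
    exact Prod.ext (phi_injective hab.1) (List.map_injective_iff.mpr phi_injective hab.2)
  have hset : {p : AGVert × List AGVert | p.1 ∈ (actionGraph (j+1)).1 ∧
        IsPath (actionGraph (j+1)).2 p.1 p.2 ∧ p.1.label = 1 ∧
        (pathLast p.1 p.2).label = j + 1} =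
      (fun p : AGVert × List AGVert => (phi p.1, p.2.map phi)) ''
      {p : AGVert × List AGVert | p.1 ∈ (actionGraph j).1 ∧
        IsPath (actionGraph j).2 p.1 p.2 ∧ p.1.label = 0 ∧
        (pathLast p.1 p.2).label = j} := by
    ext ⟨a, l⟩
    constructor
    · rintro ⟨ha, hp, h1, hlast⟩
      have hav : a = phi AGVert.root := by
        rw [hphiroot]; exact label1_unique (j+1) a ha h1
      subst hav
      obtain ⟨l', rfl, hl'⟩ := path_lift j hb l AGVert.root (root_mem j) hp
      refine ⟨(AGVert.root, l'), ⟨root_mem j, hl', rfl, ?_⟩, rfl⟩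
      show (pathLast AGVert.root l').label = j
      rw [pathLast_map, label_phi] at hlast
      omega
    · rintro ⟨⟨b, m⟩, ⟨hb1, hb2, hb3, hb4⟩, heq⟩
      simp only [Prod.mk.injEq] at heq
      obtain ⟨rfl, rfl⟩ := heq
      refine ⟨hm b hb1, isPath_map j he b m hb2, ?_, ?_⟩
      · rw [label_phi, hb3]
      · rw [pathLast_map, label_phi, hb4]
  rw [hset, Set.ncard_image_of_injective _ hF]
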